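/- Let p be an odd prime with p ≡ 3 (mod 4) and n an integer with gcd(n,p)=1. Then ∑_{χ mod p} |G(n,χ;p)|⁶ = (p-1)(10p³ - 25p² - 4p - 1), where G(n,χ;p) = ∑_{a=1}^{p-1} χ(a) e^{2πi n a²/p}. -/

import Mathlib

open Complex Finset

namespace SixthAux

variable {p : ℕ} [Fact p.Prime]

/-- complexified quadratic character -/
noncomputable def Qc (p : ℕ) [Fact p.Prime] : MulChar (ZMod p) ℂ :=
  (quadraticChar (ZMod p)).ringHomComp (Int.castRingHom ℂ)

lemma ringChar_ne (hp2 : p ≠ 2) : ringChar (ZMod p) ≠ 2 := by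
  rw [ZMod.ringChar_zmod_n]; exact hp2

lemma Qc_ne_one (hp2 : p ≠ 2) : Qc p ≠ 1 :=
  (MulChar.ringHomComp_ne_one_iff (RingHom.injective_int _)).mpr
    (quadraticChar_ne_one (ringChar_ne hp2))

lemma Qc_neg_one (hp2 : p ≠ 2) (h4 : p % 4 = 3) : Qc p (-1) = -1 := by
  unfold Qc
  rw [MulChar.ringHomComp_apply, quadraticChar_neg_one (ringChar_ne hp2),
    ZMod.card, ZMod.χ₄_nat_three_mod_four h4]
  simp

lemma Qc_zero : Qc p 0 = 0 := by
  unfold Qc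
  rw [MulChar.ringHomComp_apply, quadraticChar_zero]
  simp

lemma Qc_sq {x : ZMod p} (hx : x ≠ 0) : Qc p x * Qc p x = 1 := by
  have h := quadraticChar_sq_one hx
  rw [show (Qc p x) = (((quadraticChar (ZMod p)) x : ℤ) : ℂ) from rfl, ← Int.cast_mul, ← sq, h]
  simp

/-- the Gauss sum -/
noncomputable def gS (p : ℕ) [Fact p.Prime] : ℂ := gaussSum (Qc p) (ZMod.stdAddChar (N := p))

lemma gS_sq (hp2 : p ≠ 2) (h4 : p % 4 = 3) : gS p ^ 2 = -(p : ℂ) := by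
  have := gaussSum_sq (χ := Qc p) (ψ := ZMod.stdAddChar) (Qc_ne_one hp2)
    ((quadraticChar_isQuadratic (ZMod p)).comp _) (ZMod.isPrimitive_stdAddChar p)
  rw [gS, this, ZMod.card, Qc_neg_one hp2 h4]
  ring

lemma psi_conj (x : ZMod p) :
    (starRingEnd ℂ) (ZMod.stdAddChar x) = ZMod.stdAddChar (-x) := by
  have key : ∀ j : ℤ, (starRingEnd ℂ) (ZMod.stdAddChar ((j : ZMod p)))
      = ZMod.stdAddChar ((-j : ℤ) : ZMod p) := by
    intro j
    rw [ZMod.stdAddChar_coe, ZMod.stdAddChar_coe, ← Complex.exp_conj]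
    congr 1
    simp [map_div₀, Complex.conj_I, map_ofNat]
  have hx : ((x.val : ℤ) : ZMod p) = x := by push_cast; rw [ZMod.natCast_val, ZMod.cast_id]
  calc (starRingEnd ℂ) (ZMod.stdAddChar x)
      = (starRingEnd ℂ) (ZMod.stdAddChar ((x.val : ℤ) : ZMod p)) := by rw [hx]
    _ = ZMod.stdAddChar ((-(x.val : ℤ) : ℤ) : ZMod p) := key _
    _ = ZMod.stdAddChar (-x) := by rw [Int.cast_neg, hx]

lemma psi_exp (n : ℤ) (a : ZMod p) :
    Complex.exp (2 * Real.pi * I * n * (a.val : ℂ) ^ 2 / p)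
      = ZMod.stdAddChar ((n : ZMod p) * a ^ 2) := by
  have h : ((n * (a.val : ℤ) ^ 2 : ℤ) : ZMod p) = (n : ZMod p) * a ^ 2 := by
    push_cast
    rw [ZMod.natCast_val, ZMod.cast_id]
  rw [← h, ZMod.stdAddChar_coe]
  push_cast
  ring_nf

lemma sum_zmod_eq (h : ZMod p → ℂ) :
    ∑ a : ZMod p, h a = h 0 + ∑ u : (ZMod p)ˣ, h u := by
  rw [show (∑ u : (ZMod p)ˣ, h u) = ∑ x : {a : ZMod p // a ≠ 0}, h x from
    Fintype.sum_equiv unitsEquivNeZero _ _ (by simp),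
    ← Finset.sum_subtype (univ.erase 0) (by simp) h,
    ← Finset.add_sum_erase _ h (mem_univ 0)]

lemma sum_units_one : ∑ _u : (ZMod p)ˣ, (1 : ℂ) = (p : ℂ) - 1 := by
  have h1 : (1 : ℕ) ≤ p := (Fact.out : p.Prime).one_lt.le
  rw [Finset.sum_const, card_univ, ZMod.card_units, nsmul_eq_mul, mul_one, Nat.cast_sub h1,
    Nat.cast_one]

lemma one_ne_negone (hp2 : p ≠ 2) : (1 : (ZMod p)ˣ) ≠ -1 := by
  intro h
  have h2 : (1 : ZMod p) = -1 := by
    have := congrArg (Units.val) h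
    simpa using this
  have h3 : ((2 : ℕ) : ZMod p) = 0 := by
    push_cast
    linear_combination h2
  rw [ZMod.natCast_eq_zero_iff] at h3
  exact hp2 ((Nat.prime_dvd_prime_iff_eq (Fact.out : p.Prime) Nat.prime_two).mp h3)

lemma nn_ne_zero {n : ℤ} (hn : Int.gcd n p = 1) : (n : ZMod p) ≠ 0 := by
  intro h
  have hd : (p : ℤ) ∣ n := by rwa [ZMod.intCast_zmod_eq_zero_iff_dvd] at h
  have h2 := Int.dvd_coe_gcd hd dvd_rfl
  rw [hn] at h2
  have h3 : p = 1 := by exact_mod_cast Int.eq_one_of_dvd_one (by positivity) h2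
  exact (Fact.out : p.Prime).one_lt.ne' h3

lemma unit_sq_one_iff (c : (ZMod p)ˣ) : ((c : ZMod p))^2 = 1 ↔ c = 1 ∨ c = -1 := by
  rw [sq_eq_one_iff]
  constructor
  · rintro (h | h)
    · exact Or.inl (Units.val_eq_one.mp h)
    · refine Or.inr (Units.ext ?_)
      simpa using h
  · rintro (h | h) <;> subst h <;> simp

section LDW

variable (p) (n : ℤ)

/-- the Legendre-type function -/
noncomputable def Lf (c : (ZMod p)ˣ) : ℂ := Qc p ((n : ZMod p) * (((c : ZMod p))^2 - 1))

/-- indicator of ±1 -/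
noncomputable def df (c : (ZMod p)ˣ) : ℂ := (if c = 1 then 1 else 0) + (if c = -1 then 1 else 0)

/-- opaque inner double sum -/
noncomputable def Wf (c : (ZMod p)ˣ) : ℂ := ∑ d : (ZMod p)ˣ, Lf p n d * Lf p n (c * d)

end LDW

variable {n : ℤ}

lemma Lf_one : Lf p n 1 = 0 := by
  unfold Lf
  norm_num [Qc_zero]

lemma Lf_neg (c : (ZMod p)ˣ) : Lf p n (-c) = Lf p n c := by
  unfold Lf
  rw [Units.val_neg, neg_sq]

lemma Lf_neg_one : Lf p n (-1) = 0 := by rw [Lf_neg, Lf_one]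

lemma Lf_inv (hp2 : p ≠ 2) (h4 : p % 4 = 3) (c : (ZMod p)ˣ) :
    Lf p n c⁻¹ = - Lf p n c := by
  have hc : ((c : ZMod p)) ≠ 0 := Units.ne_zero c
  have hinv : ((c⁻¹ : (ZMod p)ˣ) : ZMod p) = ((c : ZMod p))⁻¹ := Units.val_inv_eq_inv_val c
  have harg : (n : ZMod p) * ((((c : ZMod p))⁻¹)^2 - 1)
      = (-1) * (((c : ZMod p))⁻¹ * ((c : ZMod p))⁻¹) * ((n : ZMod p) * (((c : ZMod p))^2 - 1)) := by
    field_simp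
    ring
  unfold Lf
  rw [hinv, harg, map_mul, map_mul, Qc_neg_one hp2 h4, map_mul, Qc_sq (inv_ne_zero hc)]
  ring

lemma df_one (hp2 : p ≠ 2) : df p (1 : (ZMod p)ˣ) = 1 := by
  unfold df
  rw [if_pos rfl, if_neg (one_ne_negone hp2)]
  ring

lemma df_negone (hp2 : p ≠ 2) : df p (-1 : (ZMod p)ˣ) = 1 := by
  unfold df
  rw [if_neg (Ne.symm (one_ne_negone hp2)), if_pos rfl]
  ring

lemma df_other {c : (ZMod p)ˣ} (h1 : c ≠ 1) (h2 : c ≠ -1) : df p c = 0 := by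
  unfold df
  rw [if_neg h1, if_neg h2]
  ring

lemma Lf_sq (hp2 : p ≠ 2) (hn : Int.gcd n p = 1) (c : (ZMod p)ˣ) :
    Lf p n c * Lf p n c = 1 - df p c := by
  by_cases h : ((c : ZMod p))^2 = 1
  · have h1 : Lf p n c = 0 := by
      unfold Lf
      rw [h, sub_self, mul_zero, Qc_zero]
    rcases (unit_sq_one_iff c).mp h with h2 | h2
    · subst h2
      rw [h1, df_one hp2]
      ring
    · subst h2
      rw [h1, df_negone hp2]
      ring
  · have h1 : (n : ZMod p) * (((c : ZMod p))^2 - 1) ≠ 0 :=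
      mul_ne_zero (nn_ne_zero hn) (sub_ne_zero.mpr h)
    have h2 : df p c = 0 := by
      refine df_other ?_ ?_
      · intro hc; subst hc; exact h (by simp)
      · intro hc; subst hc; exact h (by simp)
    rw [h2, Lf, Qc_sq h1]
    ring

lemma df_inv (c : (ZMod p)ˣ) : df p c⁻¹ = df p c := by
  unfold df
  congr 1
  · simp [inv_eq_one]
  · simp [inv_eq_iff_eq_inv]

lemma df_neg (c : (ZMod p)ˣ) : df p (-c) = df p c := by
  unfold df
  simp only [neg_eq_iff_eq_neg, neg_neg]
  ring

lemma df_mul_Lf (c : (ZMod p)ˣ) : df p c * Lf p n c = 0 := by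
  unfold df
  by_cases h1 : c = 1
  · subst h1; simp [Lf_one]
  by_cases h2 : c = -1
  · subst h2; simp [Lf_neg_one]
  simp [h1, h2]

lemma df_idem (hp2 : p ≠ 2) (c : (ZMod p)ˣ) : df p c * df p c = df p c := by
  by_cases h1 : c = 1
  · subst h1; rw [df_one hp2]; ring
  by_cases h2 : c = -1
  · subst h2; rw [df_negone hp2]; ring
  rw [df_other h1 h2]; ring

lemma sum_df : ∑ c : (ZMod p)ˣ, df p c = 2 := by
  unfold df
  rw [Finset.sum_add_distrib, Finset.sum_ite_eq' univ (1 : (ZMod p)ˣ) (fun _ => (1:ℂ)),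
    Finset.sum_ite_eq' univ (-1 : (ZMod p)ˣ) (fun _ => (1:ℂ))]
  norm_num

lemma sum_Lf (hp2 : p ≠ 2) (h4 : p % 4 = 3) : ∑ c : (ZMod p)ˣ, Lf p n c = 0 := by
  have h := Equiv.sum_comp (Equiv.inv (ZMod p)ˣ) (Lf p n)
  simp only [Equiv.inv_apply] at h
  rw [Finset.sum_congr rfl (fun c _ => Lf_inv hp2 h4 c), Finset.sum_neg_distrib] at h
  linear_combination -h / 2

lemma sum_Lf_sq (hp2 : p ≠ 2) (hn : Int.gcd n p = 1) :
    ∑ c : (ZMod p)ˣ, Lf p n c * Lf p n c = (p : ℂ) - 3 := by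
  rw [Finset.sum_congr rfl (fun c _ => Lf_sq hp2 hn c), Finset.sum_sub_distrib, sum_units_one,
    sum_df]
  ring

lemma sum_Lf_mulL (hp2 : p ≠ 2) (h4 : p % 4 = 3) (c : (ZMod p)ˣ) :
    ∑ d : (ZMod p)ˣ, Lf p n (c * d) = 0 := by
  rw [show (∑ d : (ZMod p)ˣ, Lf p n (c * d)) = ∑ d : (ZMod p)ˣ, Lf p n d from
    Equiv.sum_comp (Equiv.mulLeft c) (Lf p n)]
  exact sum_Lf hp2 h4

lemma sum_Lf_mulR (hp2 : p ≠ 2) (h4 : p % 4 = 3) (d : (ZMod p)ˣ) :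
    ∑ c : (ZMod p)ˣ, Lf p n (c * d) = 0 := by
  rw [show (∑ c : (ZMod p)ˣ, Lf p n (c * d)) = ∑ c : (ZMod p)ˣ, Lf p n c from
    Equiv.sum_comp (Equiv.mulRight d) (Lf p n)]
  exact sum_Lf hp2 h4

lemma sum_df_mulL (c : (ZMod p)ˣ) : ∑ d : (ZMod p)ˣ, df p (c * d) = 2 := by
  rw [show (∑ d : (ZMod p)ˣ, df p (c * d)) = ∑ d : (ZMod p)ˣ, df p d from
    Equiv.sum_comp (Equiv.mulLeft c) (df p)]
  exact sum_df

lemma df_expand (f : (ZMod p)ˣ → ℂ) (d : (ZMod p)ˣ) :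
    df p d * f d = (if d = 1 then f d else 0) + (if d = -1 then f d else 0) := by
  unfold df
  split_ifs <;> ring

lemma sum_df_weighted (f : (ZMod p)ˣ → ℂ) :
    ∑ d : (ZMod p)ˣ, df p d * f d = f 1 + f (-1) := by
  rw [Finset.sum_congr rfl (fun d _ => df_expand f d), Finset.sum_add_distrib,
    Finset.sum_ite_eq' univ (1 : (ZMod p)ˣ) f, Finset.sum_ite_eq' univ (-1 : (ZMod p)ˣ) f]
  simp

lemma sum_df_Lf_mul (c : (ZMod p)ˣ) :
    ∑ d : (ZMod p)ˣ, df p d * Lf p n (c * d) = 2 * Lf p n c := by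
  rw [sum_df_weighted (fun d => Lf p n (c * d))]
  rw [mul_one, mul_neg_one, Lf_neg]
  ring

lemma sum_Lf_df_mul (hp2 : p ≠ 2) (h4 : p % 4 = 3) (c : (ZMod p)ˣ) :
    ∑ d : (ZMod p)ˣ, Lf p n d * df p (c * d) = -2 * Lf p n c := by
  have key : ∀ d : (ZMod p)ˣ, Lf p n d * df p (c * d)
      = (if d = c⁻¹ then Lf p n d else 0) + (if d = -c⁻¹ then Lf p n d else 0) := by
    intro d
    have h1 : (c * d = 1) ↔ (d = c⁻¹) := by
      rw [mul_comm]; exact mul_eq_one_iff_eq_inv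
    have h2 : (c * d = -1) ↔ (d = -c⁻¹) := by
      constructor
      · intro h
        have hd : d = c⁻¹ * (c * d) := by group
        rw [h, mul_neg_one] at hd
        exact hd
      · intro h
        subst h
        rw [mul_neg, mul_inv_cancel]
    unfold df
    simp only [h1, h2]
    split_ifs <;> ring
  rw [Finset.sum_congr rfl (fun d _ => key d), Finset.sum_add_distrib,
    Finset.sum_ite_eq' univ (c⁻¹ : (ZMod p)ˣ) (Lf p n),
    Finset.sum_ite_eq' univ (-c⁻¹ : (ZMod p)ˣ) (Lf p n)]
  simp only [mem_univ, if_true]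
  rw [Lf_neg, Lf_inv hp2 h4]
  ring

lemma sum_df_df_mul (hp2 : p ≠ 2) (c : (ZMod p)ˣ) :
    ∑ d : (ZMod p)ˣ, df p d * df p (c * d) = 2 * df p c := by
  rw [sum_df_weighted (fun d => df p (c * d))]
  rw [mul_one, mul_neg_one, df_neg]
  ring

lemma Wf_one (hp2 : p ≠ 2) (hn : Int.gcd n p = 1) : Wf p n 1 = (p : ℂ) - 3 := by
  unfold Wf
  simp only [one_mul]
  exact sum_Lf_sq hp2 hn

lemma Wf_negone (hp2 : p ≠ 2) (hn : Int.gcd n p = 1) : Wf p n (-1) = (p : ℂ) - 3 := by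
  unfold Wf
  calc ∑ d : (ZMod p)ˣ, Lf p n d * Lf p n (-1 * d)
      = ∑ d : (ZMod p)ˣ, Lf p n d * Lf p n d := by
        refine Finset.sum_congr rfl fun d _ => ?_
        rw [neg_one_mul, Lf_neg]
    _ = (p : ℂ) - 3 := sum_Lf_sq hp2 hn

lemma Wf_inv (hp2 : p ≠ 2) (h4 : p % 4 = 3) (c : (ZMod p)ˣ) : Wf p n c⁻¹ = Wf p n c := by
  unfold Wf
  rw [show (∑ d : (ZMod p)ˣ, Lf p n d * Lf p n (c⁻¹ * d))
      = ∑ d : (ZMod p)ˣ, Lf p n d⁻¹ * Lf p n (c⁻¹ * d⁻¹) from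
    (Equiv.sum_comp (Equiv.inv (ZMod p)ˣ) (fun d => Lf p n d * Lf p n (c⁻¹ * d))).symm]
  refine Finset.sum_congr rfl fun d _ => ?_
  rw [show c⁻¹ * d⁻¹ = (c * d)⁻¹ from (mul_inv c d).symm, Lf_inv hp2 h4, Lf_inv hp2 h4]
  ring

lemma sum_Wf (hp2 : p ≠ 2) (h4 : p % 4 = 3) : ∑ c : (ZMod p)ˣ, Wf p n c = 0 := by
  unfold Wf
  rw [Finset.sum_comm]
  calc ∑ d : (ZMod p)ˣ, ∑ c : (ZMod p)ˣ, Lf p n d * Lf p n (c * d)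
      = ∑ d : (ZMod p)ˣ, Lf p n d * ∑ c : (ZMod p)ˣ, Lf p n (c * d) := by
        refine Finset.sum_congr rfl fun d _ => ?_
        rw [Finset.mul_sum]
    _ = 0 := by
        rw [Finset.sum_congr rfl fun d _ => by rw [sum_Lf_mulR hp2 h4 d, mul_zero]]
        exact Finset.sum_const_zero

lemma sum_Lf_Wf (hp2 : p ≠ 2) (h4 : p % 4 = 3) :
    ∑ c : (ZMod p)ˣ, Lf p n c * Wf p n c = 0 := by
  have h := Equiv.sum_comp (Equiv.inv (ZMod p)ˣ) (fun c => Lf p n c * Wf p n c)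
  simp only [Equiv.inv_apply] at h
  rw [Finset.sum_congr rfl (fun c _ => by rw [Lf_inv hp2 h4, Wf_inv hp2 h4] :
    ∀ c ∈ univ, Lf p n c⁻¹ * Wf p n c⁻¹ = -Lf p n c * Wf p n c)] at h
  have h2 : ∑ c : (ZMod p)ˣ, -Lf p n c * Wf p n c
      = -∑ c : (ZMod p)ˣ, Lf p n c * Wf p n c := by
    rw [← Finset.sum_neg_distrib]
    exact Finset.sum_congr rfl fun c _ => by ring
  rw [h2] at h
  linear_combination -h / 2

lemma sum_df_Wf (hp2 : p ≠ 2) (hn : Int.gcd n p = 1) :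
    ∑ c : (ZMod p)ˣ, df p c * Wf p n c = 2 * ((p : ℂ) - 3) := by
  rw [sum_df_weighted (Wf p n), Wf_one hp2 hn, Wf_negone hp2 hn]
  ring

section ffdef
variable (p) (n : ℤ)

/-- inner sum appearing in `|G|^2` -/
noncomputable def ff (c : (ZMod p)ˣ) : ℂ :=
  ∑ v : (ZMod p)ˣ, ZMod.stdAddChar (((n : ZMod p) * (((c : ZMod p))^2 - 1)) * ((v : ZMod p))^2)

end ffdef

lemma sum_psi_sq (hp2 : p ≠ 2) (m : ZMod p) :
    ∑ a : ZMod p, ZMod.stdAddChar (m * a^2)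
      = ∑ b : ZMod p, (1 + Qc p b) * ZMod.stdAddChar (m * b) := by
  classical
  rw [← Finset.sum_fiberwise' univ (fun a : ZMod p => a^2)
    (fun b : ZMod p => ZMod.stdAddChar (m * b))]
  refine Finset.sum_congr rfl fun b _ => ?_
  rw [Finset.sum_const, nsmul_eq_mul]
  congr 1
  have h := quadraticChar_card_sqrts (ringChar_ne hp2) b
  rw [Set.toFinset_setOf] at h
  have h2 : ((Finset.filter (fun x : ZMod p => x^2 = b) univ).card : ℂ)
      = ((quadraticChar (ZMod p) b + 1 : ℤ) : ℂ) := by exact_mod_cast congrArg Int.cast h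
  rw [h2]
  push_cast
  rw [show (((quadraticChar (ZMod p)) b : ℤ) : ℂ) = Qc p b from rfl]
  ring

lemma sum_psi_sq_ne (hp2 : p ≠ 2) {m : ZMod p} (hm : m ≠ 0) :
    ∑ a : ZMod p, ZMod.stdAddChar (m * a^2) = Qc p m * gS p := by
  rw [sum_psi_sq hp2 m]
  have hsplit : ∑ b : ZMod p, (1 + Qc p b) * ZMod.stdAddChar (m * b)
      = (∑ b : ZMod p, ZMod.stdAddChar (m * b))
        + ∑ b : ZMod p, Qc p b * ZMod.stdAddChar (m * b) := by
    rw [← Finset.sum_add_distrib]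
    exact Finset.sum_congr rfl fun b _ => by ring
  rw [hsplit]
  have h1 : ∑ b : ZMod p, ZMod.stdAddChar (m * b) = 0 := by
    have h := AddChar.sum_mulShift (R := ZMod p) (R' := ℂ) (ψ := ZMod.stdAddChar) m
      (ZMod.isPrimitive_stdAddChar p)
    rw [if_neg hm] at h
    push_cast at h
    rw [← h]
    exact Finset.sum_congr rfl fun b _ => by rw [mul_comm]
  have h3 := gaussSum_mulShift (Qc p) (ZMod.stdAddChar (N := p)) (Units.mk0 m hm)
  have h4 : gaussSum (Qc p) (AddChar.mulShift ZMod.stdAddChar ((Units.mk0 m hm : (ZMod p)ˣ) : ZMod p))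
      = ∑ b : ZMod p, Qc p b * ZMod.stdAddChar (m * b) := by
    unfold gaussSum
    exact Finset.sum_congr rfl fun b _ => by rw [AddChar.mulShift_apply, Units.val_mk0]
  rw [h4] at h3
  have h5 : (Units.mk0 m hm : ZMod p) = m := rfl
  rw [h5] at h3
  rw [h1, zero_add]
  calc ∑ b : ZMod p, Qc p b * ZMod.stdAddChar (m * b)
      = (Qc p m * Qc p m) * ∑ b : ZMod p, Qc p b * ZMod.stdAddChar (m * b) := by
        rw [Qc_sq hm, one_mul]
    _ = Qc p m * (Qc p m * ∑ b : ZMod p, Qc p b * ZMod.stdAddChar (m * b)) := by ring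
    _ = Qc p m * gS p := by rw [h3]; rfl

lemma ff_eval (hp2 : p ≠ 2) (h4 : p % 4 = 3) (hn : Int.gcd n p = 1) (c : (ZMod p)ˣ) :
    ff p n c = gS p * Lf p n c - 1 + p * df p c := by
  have hkey : ∑ a : ZMod p, ZMod.stdAddChar (((n : ZMod p) * (((c : ZMod p))^2 - 1)) * a^2)
      = 1 + ff p n c := by
    rw [sum_zmod_eq (fun a : ZMod p =>
      ZMod.stdAddChar (((n : ZMod p) * (((c : ZMod p))^2 - 1)) * a^2))]
    congr 1
    rw [show (0 : ZMod p)^2 = 0 from by ring, mul_zero, AddChar.map_zero_eq_one]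
  by_cases hc : ((c : ZMod p))^2 = 1
  · have hm0 : (n : ZMod p) * (((c : ZMod p))^2 - 1) = 0 := by rw [hc]; ring
    have hff : ff p n c = (p : ℂ) - 1 := by
      have h1 : ff p n c = ∑ v : (ZMod p)ˣ, (1:ℂ) :=
        Finset.sum_congr rfl (fun v _ => by rw [hm0, zero_mul, AddChar.map_zero_eq_one])
      rw [h1, sum_units_one]
    have hL : Lf p n c = 0 := by unfold Lf; rw [hm0, Qc_zero]
    have hd : df p c = 1 := by
      rcases (unit_sq_one_iff c).mp hc with h | h
      · rw [h, df_one hp2]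
      · rw [h, df_negone hp2]
    rw [hff, hL, hd]
    ring
  · have hm : (n : ZMod p) * (((c : ZMod p))^2 - 1) ≠ 0 :=
      mul_ne_zero (nn_ne_zero hn) (sub_ne_zero.mpr hc)
    have h2 := sum_psi_sq_ne hp2 hm
    rw [hkey] at h2
    have hd : df p c = 0 := df_other (fun h => hc (by rw [h]; simp)) (fun h => hc (by rw [h]; simp))
    have hL : Lf p n c = Qc p ((n : ZMod p) * (((c : ZMod p))^2 - 1)) := rfl
    rw [hd, hL]
    linear_combination h2

lemma ff_inv (hp2 : p ≠ 2) (h4 : p % 4 = 3) (hn : Int.gcd n p = 1) (e : (ZMod p)ˣ) :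
    ff p n e⁻¹ = -(gS p) * Lf p n e - 1 + (p : ℂ) * df p e := by
  rw [ff_eval hp2 h4 hn e⁻¹, Lf_inv hp2 h4, df_inv]
  ring

lemma bigsum (hp2 : p ≠ 2) (h4 : p % 4 = 3) (hn : Int.gcd n p = 1) :
    ∑ c : (ZMod p)ˣ, ∑ d : (ZMod p)ˣ, ff p n c * ff p n d * ff p n ((c * d)⁻¹)
      = 10*(p:ℂ)^3 - 25*(p:ℂ)^2 - 4*(p:ℂ) - 1 := by
  have hbr : ∀ c : (ZMod p)ˣ,
      ∑ d : (ZMod p)ˣ, ff p n c * ff p n d * ff p n ((c * d)⁻¹)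
      = ff p n c * (-(gS p^2) * Wf p n c - 4*(p:ℂ)*gS p*Lf p n c + 2*(p:ℂ)^2*df p c
          - 3*(p:ℂ) - 1) := by
    intro c
    have expand : ∀ d : (ZMod p)ˣ,
        ff p n c * ff p n d * ff p n ((c * d)⁻¹)
        = ff p n c * ((-(gS p^2)) * (Lf p n d * Lf p n (c*d))
            + (gS p * p) * (Lf p n d * df p (c*d))
            + (-(gS p)) * Lf p n d
            + (-(p * gS p)) * (df p d * Lf p n (c*d))
            + ((p:ℂ)^2) * (df p d * df p (c*d))
            + (-(p:ℂ)) * df p d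
            + gS p * Lf p n (c*d)
            + (-(p:ℂ)) * df p (c*d)
            + 1) := by
      intro d
      rw [ff_eval hp2 h4 hn c, ff_eval hp2 h4 hn d, ff_inv hp2 h4 hn (c*d)]
      ring
    rw [Finset.sum_congr rfl (fun d _ => expand d), ← Finset.mul_sum]
    congr 1
    simp only [Finset.sum_add_distrib, ← Finset.mul_sum]
    rw [show (∑ d : (ZMod p)ˣ, Lf p n d * Lf p n (c * d)) = Wf p n c from rfl,
      sum_Lf_df_mul hp2 h4 c, sum_Lf hp2 h4, sum_df_Lf_mul c, sum_df_df_mul hp2 c,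
      sum_df, sum_Lf_mulL hp2 h4 c, sum_df_mulL c, sum_units_one]
    ring
  rw [Finset.sum_congr rfl (fun c _ => hbr c)]
  have expand2 : ∀ c : (ZMod p)ˣ,
      ff p n c * (-(gS p^2) * Wf p n c - 4*(p:ℂ)*gS p*Lf p n c + 2*(p:ℂ)^2*df p c
          - 3*(p:ℂ) - 1)
      = (-(gS p^3)) * (Lf p n c * Wf p n c)
        + (-(4*(p:ℂ)*gS p^2)) * (Lf p n c * Lf p n c)
        + (-(2*(p:ℂ)^2*gS p)) * (df p c * Lf p n c)
        + (((p:ℂ)-1)*gS p) * (Lf p n c)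
        + (gS p^2) * (Wf p n c)
        + (-((p:ℂ)*gS p^2)) * (df p c * Wf p n c)
        + (2*(p:ℂ)^3) * (df p c * df p c)
        + (-(5*(p:ℂ)^2)-(p:ℂ)) * (df p c)
        + (3*(p:ℂ)+1) * 1 := by
    intro c
    rw [ff_eval hp2 h4 hn c]
    ring
  rw [Finset.sum_congr rfl (fun c _ => expand2 c)]
  simp only [Finset.sum_add_distrib, ← Finset.mul_sum]
  rw [sum_Lf_Wf hp2 h4, sum_Lf_sq hp2 hn,
    Finset.sum_congr rfl (fun c _ => df_mul_Lf c), Finset.sum_const_zero,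
    sum_Lf hp2 h4, sum_Wf hp2 h4, sum_df_Wf hp2 hn,
    Finset.sum_congr rfl (fun c _ => df_idem hp2 c), sum_df, sum_units_one]
  linear_combination (-6*(p:ℂ)*((p:ℂ)-3)) * (gS_sq hp2 h4)

lemma unit_norm (χ : DirichletCharacter ℂ p) (v : (ZMod p)ˣ) :
    χ (v : ZMod p) * (starRingEnd ℂ) (χ (v : ZMod p)) = 1 := by
  have hpow : (χ (v : ZMod p)) ^ (p - 1) = 1 := by
    rw [← map_pow, ← Units.val_pow_eq_pow_val, ZMod.units_pow_card_sub_one_eq_one,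
      Units.val_one, map_one]
  have hnorm : ‖χ (v : ZMod p)‖ = 1 :=
    norm_eq_one_of_pow_eq_one hpow (Nat.sub_ne_zero_of_lt (Fact.out : p.Prime).one_lt)
  rw [Complex.mul_conj]
  norm_cast
  rw [Complex.normSq_eq_norm_sq, hnorm]
  norm_num

lemma GG_eval (hp2 : p ≠ 2) {n : ℤ} (χ : DirichletCharacter ℂ p) :
    (∑ u : (ZMod p)ˣ, χ (u : ZMod p) * ZMod.stdAddChar ((n : ZMod p) * ((u : ZMod p))^2))
      * (starRingEnd ℂ) (∑ u : (ZMod p)ˣ, χ (u : ZMod p)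
          * ZMod.stdAddChar ((n : ZMod p) * ((u : ZMod p))^2))
    = ∑ c : (ZMod p)ˣ, χ (c : ZMod p) * ff p n c := by
  have hconj : (starRingEnd ℂ) (∑ u : (ZMod p)ˣ, χ (u : ZMod p)
      * ZMod.stdAddChar ((n : ZMod p) * ((u : ZMod p))^2))
      = ∑ v : (ZMod p)ˣ, (starRingEnd ℂ) (χ (v : ZMod p))
          * ZMod.stdAddChar (-((n : ZMod p) * ((v : ZMod p))^2)) := by
    rw [map_sum]
    refine Finset.sum_congr rfl fun v _ => ?_
    rw [map_mul, psi_conj]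
  rw [hconj, Finset.sum_mul_sum, Finset.sum_comm]
  have hinner : ∀ v : (ZMod p)ˣ,
      ∑ u : (ZMod p)ˣ, (χ (u : ZMod p) * ZMod.stdAddChar ((n : ZMod p) * ((u : ZMod p))^2))
        * ((starRingEnd ℂ) (χ (v : ZMod p))
            * ZMod.stdAddChar (-((n : ZMod p) * ((v : ZMod p))^2)))
      = ∑ c : (ZMod p)ˣ, χ (c : ZMod p)
          * ZMod.stdAddChar (((n : ZMod p) * (((c : ZMod p))^2 - 1)) * ((v : ZMod p))^2) := by
    intro v
    rw [← Equiv.sum_comp (Equiv.mulLeft v) (fun u : (ZMod p)ˣ =>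
      (χ (u : ZMod p) * ZMod.stdAddChar ((n : ZMod p) * ((u : ZMod p))^2))
        * ((starRingEnd ℂ) (χ (v : ZMod p))
            * ZMod.stdAddChar (-((n : ZMod p) * ((v : ZMod p))^2))))]
    refine Finset.sum_congr rfl fun c _ => ?_
    simp only [Equiv.coe_mulLeft]
    have hψ : ZMod.stdAddChar ((n : ZMod p) * (((v * c : (ZMod p)ˣ) : ZMod p))^2)
        * ZMod.stdAddChar (-((n : ZMod p) * ((v : ZMod p))^2))
        = ZMod.stdAddChar (((n : ZMod p) * (((c : ZMod p))^2 - 1)) * ((v : ZMod p))^2) := by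
      rw [← AddChar.map_add_eq_mul]
      congr 1
      rw [Units.val_mul]
      ring
    calc (χ ((v * c : (ZMod p)ˣ) : ZMod p)
          * ZMod.stdAddChar ((n : ZMod p) * (((v * c : (ZMod p)ˣ) : ZMod p))^2))
        * ((starRingEnd ℂ) (χ (v : ZMod p))
            * ZMod.stdAddChar (-((n : ZMod p) * ((v : ZMod p))^2)))
        = (χ (v : ZMod p) * (starRingEnd ℂ) (χ (v : ZMod p))) * (χ (c : ZMod p)
            * (ZMod.stdAddChar ((n : ZMod p) * (((v * c : (ZMod p)ˣ) : ZMod p))^2)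
              * ZMod.stdAddChar (-((n : ZMod p) * ((v : ZMod p))^2)))) := by
          rw [Units.val_mul, map_mul]
          ring
      _ = χ (c : ZMod p)
            * ZMod.stdAddChar (((n : ZMod p) * (((c : ZMod p))^2 - 1)) * ((v : ZMod p))^2) := by
          rw [unit_norm, hψ]
          ring
  rw [Finset.sum_congr rfl (fun v _ => hinner v), Finset.sum_comm]
  refine Finset.sum_congr rfl fun c _ => ?_
  rw [← Finset.mul_sum]
  rfl

lemma orth_step (hp2 : p ≠ 2) (n : ℤ) :
    ∑ χ : DirichletCharacter ℂ p, (∑ c : (ZMod p)ˣ, χ (c : ZMod p) * ff p n c)^3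
      = ((p : ℂ) - 1) * ∑ c : (ZMod p)ˣ, ∑ d : (ZMod p)ˣ,
          ff p n c * ff p n d * ff p n ((c * d)⁻¹) := by
  have hcube : ∀ χ : DirichletCharacter ℂ p, (∑ c : (ZMod p)ˣ, χ (c : ZMod p) * ff p n c)^3
      = ∑ c : (ZMod p)ˣ, ∑ d : (ZMod p)ˣ, ∑ e : (ZMod p)ˣ,
          χ ((c * d * e : (ZMod p)ˣ) : ZMod p) * (ff p n c * ff p n d * ff p n e) := by
    intro χ
    rw [show (∑ c : (ZMod p)ˣ, χ (c : ZMod p) * ff p n c)^3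
      = (∑ c : (ZMod p)ˣ, χ (c : ZMod p) * ff p n c) * (∑ c : (ZMod p)ˣ, χ (c : ZMod p) * ff p n c)
        * (∑ c : (ZMod p)ˣ, χ (c : ZMod p) * ff p n c) from by ring]
    simp only [Finset.sum_mul, Finset.mul_sum]
    refine Finset.sum_congr rfl fun c _ => Finset.sum_congr rfl fun d _ =>
      Finset.sum_congr rfl fun e _ => ?_
    rw [Units.val_mul, Units.val_mul, map_mul, map_mul]
    ring
  rw [Finset.sum_congr rfl (fun χ _ => hcube χ), Finset.sum_comm]
  have hswap : ∀ c : (ZMod p)ˣ,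
      ∑ χ : DirichletCharacter ℂ p, ∑ d : (ZMod p)ˣ, ∑ e : (ZMod p)ˣ,
          χ ((c * d * e : (ZMod p)ˣ) : ZMod p) * (ff p n c * ff p n d * ff p n e)
      = ∑ d : (ZMod p)ˣ, (ff p n c * ff p n d * ff p n ((c * d)⁻¹)) * ((p : ℂ) - 1) := by
    intro c
    rw [Finset.sum_comm]
    refine Finset.sum_congr rfl fun d _ => ?_
    rw [Finset.sum_comm]
    have hE : ∀ e : (ZMod p)ˣ,
        ∑ χ : DirichletCharacter ℂ p,
            χ ((c * d * e : (ZMod p)ˣ) : ZMod p) * (ff p n c * ff p n d * ff p n e)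
        = (if e = (c * d)⁻¹ then ((p : ℂ) - 1) * (ff p n c * ff p n d * ff p n e) else 0) := by
      intro e
      rw [← Finset.sum_mul, DirichletCharacter.sum_characters_eq]
      have hcond : (((c * d * e : (ZMod p)ˣ) : ZMod p) = 1) ↔ (e = (c * d)⁻¹) := by
        rw [Units.val_eq_one]
        rw [mul_comm (c*d) e]
        exact mul_eq_one_iff_eq_inv
      simp only [hcond]
      have htot : ((p.totient : ℂ)) = (p : ℂ) - 1 := by
        rw [Nat.totient_prime (Fact.out : p.Prime)]
        have h1 : (1 : ℕ) ≤ p := (Fact.out : p.Prime).one_lt.le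
        rw [Nat.cast_sub h1, Nat.cast_one]
      split_ifs with h
      · rw [htot]
      · ring
    rw [Finset.sum_congr rfl (fun e _ => hE e), Finset.sum_ite_eq' univ ((c * d)⁻¹ : (ZMod p)ˣ)
      (fun e => ((p : ℂ) - 1) * (ff p n c * ff p n d * ff p n e))]
    simp only [mem_univ, if_true]
    ring
  rw [Finset.sum_congr rfl (fun c _ => hswap c)]
  rw [Finset.mul_sum]
  refine Finset.sum_congr rfl fun c _ => ?_
  rw [Finset.mul_sum]
  refine Finset.sum_congr rfl fun d _ => ?_
  ring

end SixthAux

open SixthAux in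
theorem sixth_power_mean_three_mod_four (p : ℕ) [Fact p.Prime] (hp2 : p ≠ 2)
    (h4 : p % 4 = 3) (n : ℤ) (hn : Int.gcd n p = 1) :
    ∑ χ : DirichletCharacter ℂ p,
        (‖(∑ a : ZMod p, χ a *
          Complex.exp (2 * Real.pi * I * n * (a.val : ℂ) ^ 2 / p))‖) ^ 6
      = ((p : ℝ) - 1) * (10 * (p : ℝ) ^ 3 - 25 * (p : ℝ) ^ 2 - 4 * p - 1) := by
  have hS : ∀ χ : DirichletCharacter ℂ p,
      (∑ a : ZMod p, χ a * Complex.exp (2 * Real.pi * I * n * (a.val : ℂ) ^ 2 / p))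
      = ∑ u : (ZMod p)ˣ, χ (u : ZMod p) * ZMod.stdAddChar ((n : ZMod p) * ((u : ZMod p))^2) := by
    intro χ
    rw [Finset.sum_congr rfl (fun a _ => by rw [psi_exp n a] :
      ∀ a ∈ Finset.univ, χ a * Complex.exp (2 * Real.pi * I * n * (a.val : ℂ) ^ 2 / p)
        = χ a * ZMod.stdAddChar ((n : ZMod p) * a^2)),
      sum_zmod_eq (fun a : ZMod p => χ a * ZMod.stdAddChar ((n : ZMod p) * a^2))]
    rw [MulChar.map_nonunit χ not_isUnit_zero, zero_mul, zero_add]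
  have habs : ∀ z : ℂ, ((‖z‖ : ℝ) : ℂ)^6 = (z * (starRingEnd ℂ) z)^3 := by
    intro z
    rw [Complex.mul_conj]
    norm_cast
    rw [Complex.normSq_eq_norm_sq]
    ring
  apply Complex.ofReal_injective
  push_cast
  calc ∑ χ : DirichletCharacter ℂ p,
        ((‖(∑ a : ZMod p, χ a *
          Complex.exp (2 * Real.pi * I * n * (a.val : ℂ) ^ 2 / p))‖ : ℝ) : ℂ) ^ 6
      = ∑ χ : DirichletCharacter ℂ p,
          (∑ c : (ZMod p)ˣ, χ (c : ZMod p) * ff p n c)^3 := by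
        refine Finset.sum_congr rfl fun χ _ => ?_
        rw [habs, hS χ, GG_eval hp2 χ]
    _ = ((p : ℂ) - 1) * ∑ c : (ZMod p)ˣ, ∑ d : (ZMod p)ˣ,
          ff p n c * ff p n d * ff p n ((c * d)⁻¹) := orth_step hp2 n
    _ = ((p : ℂ) - 1) * (10*(p:ℂ)^3 - 25*(p:ℂ)^2 - 4*(p:ℂ) - 1) := by
        rw [bigsum hp2 h4 hn]
    _ = ((p : ℂ) - 1) * (10 * (p : ℂ) ^ 3 - 25 * (p : ℂ) ^ 2 - 4 * (p:ℂ) - 1) := by ring
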